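/- For the H-type algebra n̂ with T₁ = J₁ = [[0,I_r],[-I_r,0]] and T₂ = J₂ = [[0, iI_r],[iI_r, 0]] (blocks over ℝ⟨1,i⟩ ≅ ℂ embedded as 2×2 real matrices), the Lie algebra g₀(n̂) = {X : J₁X + XᵀJ₁ = 0, J₂X + XᵀJ₂ = 0} is isomorphic as a real Lie algebra to sp(r,ℂ) regarded as a real Lie algebra; in particular its real dimension is r(2r+1)·2. -/

import Mathlib

open Matrix

attribute [local instance] LieRing.ofAssociativeRing

/-- The 2×2 real matrix representing the complex unit `i`. -/
def imat : Matrix (Fin 2) (Fin 2) ℝ := !![0, -1; 1, 0]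

/-- `J₁ = [[0, I_r],[-I_r, 0]]` with `r × r` blocks over `ℝ⟨1,i⟩ ≅ ℂ` (realized as
2×2 real matrices), i.e. a `4r × 4r` real matrix. -/
def J1mat (r : ℕ) :
    Matrix ((Fin r × Fin 2) ⊕ (Fin r × Fin 2)) ((Fin r × Fin 2) ⊕ (Fin r × Fin 2)) ℝ :=
  Matrix.fromBlocks 0 1 (-1) 0

/-- The `2r × 2r` real matrix representing `i·I_r` over `ℝ⟨1,i⟩ ≅ ℂ`. -/
def iIr (r : ℕ) : Matrix (Fin r × Fin 2) (Fin r × Fin 2) ℝ :=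
  fun p q => if p.1 = q.1 then imat p.2 q.2 else 0

/-- `J₂ = [[0, iI_r],[iI_r, 0]]` as a `4r × 4r` real matrix. -/
def J2mat (r : ℕ) :
    Matrix ((Fin r × Fin 2) ⊕ (Fin r × Fin 2)) ((Fin r × Fin 2) ⊕ (Fin r × Fin 2)) ℝ :=
  Matrix.fromBlocks 0 (iIr r) (iIr r) 0

namespace Stmt19Aux

noncomputable section

/-- Realification of a complex number as a 2×2 real matrix. -/
def cm (z : ℂ) : Matrix (Fin 2) (Fin 2) ℝ := !![z.re, -z.im; z.im, z.re]

/-- The 2×2 matrix of complex conjugation. -/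
def emat : Matrix (Fin 2) (Fin 2) ℝ := !![1, 0; 0, -1]

lemma cm_add (z w : ℂ) : cm (z + w) = cm z + cm w := by
  ext i j
  fin_cases i <;> fin_cases j <;> simp [cm, Matrix.add_apply] <;> ring

lemma cm_zero : cm 0 = 0 := by
  ext i j; fin_cases i <;> fin_cases j <;> simp [cm]

lemma cm_one : cm 1 = 1 := by
  ext i j; fin_cases i <;> fin_cases j <;> simp [cm, Matrix.one_apply]

lemma cm_mul (z w : ℂ) : cm (z * w) = cm z * cm w := by
  ext i j
  fin_cases i <;> fin_cases j <;>
    simp [cm, Matrix.mul_apply, Fin.sum_univ_two, Complex.mul_re, Complex.mul_im] <;> ring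

lemma cm_smul (r : ℝ) (z : ℂ) : cm (r • z) = r • cm z := by
  ext i j
  fin_cases i <;> fin_cases j <;>
    simp [cm, Matrix.smul_apply, Complex.smul_re, Complex.smul_im] <;> ring

lemma cm_transpose (z : ℂ) : (cm z)ᵀ = cm ((starRingEnd ℂ) z) := by
  ext i j
  fin_cases i <;> fin_cases j <;> simp [cm]

lemma cm_emat (z : ℂ) : cm z * emat = emat * cm ((starRingEnd ℂ) z) := by
  ext i j
  fin_cases i <;> fin_cases j <;>
    simp [cm, emat, Matrix.mul_apply, Fin.sum_univ_two]

lemma emat_emat : emat * emat = 1 := by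
  ext i j
  fin_cases i <;> fin_cases j <;>
    simp [emat, Matrix.mul_apply, Fin.sum_univ_two, Matrix.one_apply]

lemma cm_inj {z w : ℂ} (h : cm z = cm w) : z = w := by
  have h1 := congrFun (congrFun h 0) 0
  have h2 := congrFun (congrFun h 1) 0
  simp [cm] at h1 h2
  exact Complex.ext h1 h2

lemma cm_I : cm Complex.I = imat := by
  ext i j; fin_cases i <;> fin_cases j <;> simp [cm, imat]

variable {n : Type*} [Fintype n] [DecidableEq n]

/-- Realification of a complex matrix. -/
def RL (M : Matrix n n ℂ) : Matrix (n × Fin 2) (n × Fin 2) ℝ :=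
  fun p q => cm (M p.1 q.1) p.2 q.2

/-- The block-diagonal conjugation matrix. -/
def Kn (n : Type*) [Fintype n] [DecidableEq n] : Matrix (n × Fin 2) (n × Fin 2) ℝ :=
  fun p q => if p.1 = q.1 then emat p.2 q.2 else 0

lemma RL_add (M N : Matrix n n ℂ) : RL (M + N) = RL M + RL N := by
  ext p q
  simp [RL, Matrix.add_apply, cm_add]

lemma RL_neg (M : Matrix n n ℂ) : RL (-M) = -RL M := by
  have := RL_add M (-M)
  simp only [add_neg_cancel] at this
  have h0 : RL (0 : Matrix n n ℂ) = 0 := by ext p q; simp [RL, cm_zero]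
  rw [h0] at this
  linear_combination (norm := module) -this

lemma RL_sub (M N : Matrix n n ℂ) : RL (M - N) = RL M - RL N := by
  rw [sub_eq_add_neg, sub_eq_add_neg, RL_add, RL_neg]

lemma RL_smul (r : ℝ) (M : Matrix n n ℂ) : RL (r • M) = r • RL M := by
  ext p q
  have : (r • M) p.1 q.1 = r • M p.1 q.1 := rfl
  simp only [RL, Matrix.smul_apply, this, cm_smul]

lemma RL_one : RL (1 : Matrix n n ℂ) = 1 := by
  ext p q
  rcases p with ⟨j, s⟩; rcases q with ⟨k, t⟩
  by_cases h : j = k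
  · subst h
    simp [RL, Matrix.one_apply, cm_one, Prod.ext_iff]
  · simp [RL, Matrix.one_apply, h, cm_zero, Prod.ext_iff]

lemma RL_mul (M N : Matrix n n ℂ) : RL (M * N) = RL M * RL N := by
  ext p q
  rcases p with ⟨j, s⟩; rcases q with ⟨k, t⟩
  have : (∑ l, M j l * N l k) = (M * N) j k := (Matrix.mul_apply).symm
  calc RL (M * N) (j, s) (k, t) = cm (∑ l, M j l * N l k) s t := by
        simp [RL, Matrix.mul_apply]
    _ = (∑ l, cm (M j l * N l k)) s t := by
        have hsum : cm (∑ l, M j l * N l k) = ∑ l, cm (M j l * N l k) :=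
          map_sum (AddMonoidHom.mk' cm cm_add) _ _
        rw [hsum]
    _ = ∑ l, (cm (M j l) * cm (N l k)) s t := by
        rw [Matrix.sum_apply]
        exact Finset.sum_congr rfl fun l _ => by rw [cm_mul]
    _ = ∑ l, ∑ u, cm (M j l) s u * cm (N l k) u t := by
        exact Finset.sum_congr rfl fun l _ => by rw [Matrix.mul_apply]
    _ = (RL M * RL N) (j, s) (k, t) := by
        rw [Matrix.mul_apply, Fintype.sum_prod_type]
        rfl

lemma RL_transpose (M : Matrix n n ℂ) : (RL M)ᵀ = RL (Mᵀ.map (starRingEnd ℂ)) := by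
  ext p q
  rcases p with ⟨j, s⟩; rcases q with ⟨k, t⟩
  have := congrFun (congrFun (cm_transpose (M k j)) s) t
  simpa [RL, Matrix.transpose_apply, Matrix.map_apply] using this

lemma RL_inj : Function.Injective (RL (n := n)) := by
  intro M N h
  ext j k
  have : cm (M j k) = cm (N j k) := by
    ext s t
    exact congrFun (congrFun h (j, s)) (k, t)
  rw [cm_inj this]

lemma sum_ite_left (j : n) (f : n × Fin 2 → ℝ) :
    (∑ p : n × Fin 2, if j = p.1 then f p else 0) = ∑ u, f (j, u) := by
  rw [Fintype.sum_prod_type]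
  simp [Finset.sum_add_distrib, Finset.sum_ite_eq]

lemma sum_ite_right (k : n) (f : n × Fin 2 → ℝ) :
    (∑ p : n × Fin 2, if p.1 = k then f p else 0) = ∑ u, f (k, u) := by
  rw [Fintype.sum_prod_type]
  simp [Finset.sum_add_distrib, Finset.sum_ite_eq']

lemma Kn_mul_Kn : Kn n * Kn n = 1 := by
  ext ⟨j, s⟩ ⟨k, t⟩
  rw [Matrix.mul_apply]
  simp only [Kn, ite_mul, zero_mul]
  rw [sum_ite_left j (fun p => emat s p.2 * if p.1 = k then emat p.2 t else 0)]
  by_cases h : j = k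
  · subst h
    have h2 := congrFun (congrFun emat_emat s) t
    rw [Matrix.mul_apply] at h2
    simp only [if_pos rfl, if_true]
    rw [Matrix.one_apply] at h2
    rw [h2]
    simp [Matrix.one_apply, Prod.ext_iff]
  · simp [h, Matrix.one_apply, Prod.ext_iff]

lemma RL_mul_Kn (M : Matrix n n ℂ) :
    RL M * Kn n = Kn n * RL (M.map (starRingEnd ℂ)) := by
  ext ⟨j, s⟩ ⟨k, t⟩
  rw [Matrix.mul_apply, Matrix.mul_apply]
  simp only [Kn, RL, Matrix.map_apply, mul_ite, mul_zero, ite_mul, zero_mul]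
  rw [sum_ite_right k (fun p => cm (M j p.1) s p.2 * emat p.2 t),
    sum_ite_left j (fun p => emat s p.2 * cm ((starRingEnd ℂ) (M p.1 k)) p.2 t)]
  have := congrFun (congrFun (cm_emat (M j k)) s) t
  rw [Matrix.mul_apply, Matrix.mul_apply] at this
  simpa using this

lemma Kn_mul_RL (M : Matrix n n ℂ) :
    Kn n * RL M = RL (M.map (starRingEnd ℂ)) * Kn n := by
  have := RL_mul_Kn (M.map (starRingEnd ℂ)) (n := n)
  have h2 : (M.map (starRingEnd ℂ)).map (starRingEnd ℂ) = M := by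
    ext j k; simp [Matrix.map_apply]
  rw [h2] at this
  exact this.symm

lemma RL_mul_Kn_inj {M N : Matrix n n ℂ} (h : RL M * Kn n = RL N * Kn n) : M = N := by
  have : RL M * Kn n * Kn n = RL N * Kn n * Kn n := by rw [h]
  rw [Matrix.mul_assoc, Matrix.mul_assoc, Kn_mul_Kn, Matrix.mul_one, Matrix.mul_one] at this
  exact RL_inj this

variable {n : Type*} [Fintype n] [DecidableEq n]

/-- Entrywise complex conjugation of a matrix. -/
def sg (M : Matrix n n ℂ) : Matrix n n ℂ := M.map (starRingEnd ℂ)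

lemma sg_sg (M : Matrix n n ℂ) : sg (sg M) = M := by
  ext j k; simp [sg, Matrix.map_apply]

lemma sg_add (M N : Matrix n n ℂ) : sg (M + N) = sg M + sg N := by
  ext j k; simp [sg, Matrix.map_apply]

lemma sg_neg (M : Matrix n n ℂ) : sg (-M) = -sg M := by
  ext j k; simp [sg, Matrix.map_apply]

lemma sg_sub (M N : Matrix n n ℂ) : sg (M - N) = sg M - sg N := by
  ext j k; simp [sg, Matrix.map_apply, sub_eq_add_neg]

lemma sg_mul (M N : Matrix n n ℂ) : sg (M * N) = sg M * sg N := by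
  ext j k
  simp [sg, Matrix.map_apply, Matrix.mul_apply, map_sum]

lemma sg_transpose (M : Matrix n n ℂ) : sg Mᵀ = (sg M)ᵀ := rfl

lemma sg_smul (r : ℝ) (M : Matrix n n ℂ) : sg (r • M) = r • sg M := by
  ext j k
  simp [sg, Matrix.map_apply, Matrix.smul_apply, Complex.conj_ofReal]

lemma sg_I_smul (M : Matrix n n ℂ) : sg (Complex.I • M) = -(Complex.I • sg M) := by
  ext j k
  simp [sg, Matrix.map_apply, Matrix.smul_apply, Complex.conj_I]

lemma sg_inj {M N : Matrix n n ℂ} (h : sg M = sg N) : M = N := by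
  rw [← sg_sg M, h, sg_sg]

lemma sg_eq_zero_iff {M : Matrix n n ℂ} : sg M = 0 ↔ M = 0 := by
  constructor
  · intro h
    apply sg_inj
    rw [h]; ext j k; simp [sg, Matrix.map_apply]
  · rintro rfl; ext j k; simp [sg, Matrix.map_apply]

lemma RL_zero : RL (0 : Matrix n n ℂ) = 0 := by
  ext p q; simp [RL, cm_zero]

lemma RL_eq_zero_iff {M : Matrix n n ℂ} : RL M = 0 ↔ M = 0 := by
  constructor
  · intro h; exact RL_inj (by rw [h, RL_zero])
  · rintro rfl; exact RL_zero

lemma RLK_eq_zero_iff {M : Matrix n n ℂ} : RL M * Kn n = 0 ↔ M = 0 := by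
  constructor
  · intro h
    have h2 : RL M = 0 := by
      have h3 : RL M * Kn n * Kn n = 0 * Kn n := by rw [h]
      rwa [Matrix.mul_assoc, Kn_mul_Kn, Matrix.mul_one, Matrix.zero_mul] at h3
    exact RL_eq_zero_iff.mp h2
  · rintro rfl; rw [RL_zero, Matrix.zero_mul]

lemma Kn_transpose : (Kn n)ᵀ = Kn n := by
  ext ⟨j, s⟩ ⟨k, t⟩
  simp only [Matrix.transpose_apply, Kn]
  by_cases h : j = k
  · subst h; simp [emat]; fin_cases s <;> fin_cases t <;> simp [emat]
  · simp [h, Ne.symm h]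

lemma RL_transpose' (M : Matrix n n ℂ) : (RL M)ᵀ = RL (sg Mᵀ) := RL_transpose M

lemma RLK_transpose (M : Matrix n n ℂ) : (RL M * Kn n)ᵀ = RL Mᵀ * Kn n := by
  rw [Matrix.transpose_mul, Kn_transpose, RL_transpose']
  rw [Kn_mul_RL]
  congr 1
  exact congrArg RL (sg_sg Mᵀ)

/-- The 4r×4r analogue of `iIr`. -/
def JnIf (n : Type*) [Fintype n] [DecidableEq n] :
    Matrix (n × Fin 2) (n × Fin 2) ℝ :=
  fun p q => if p.1 = q.1 then imat p.2 q.2 else 0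

lemma JnIf_eq : JnIf n = RL (Complex.I • (1 : Matrix n n ℂ)) := by
  ext ⟨j, s⟩ ⟨k, t⟩
  simp only [JnIf, RL, Matrix.smul_apply, Matrix.one_apply]
  by_cases h : j = k
  · subst h
    simp [cm_I]
  · simp [h, cm_zero]

lemma i1_mul (x : Matrix n n ℂ) :
    (Complex.I • (1 : Matrix n n ℂ)) * x = Complex.I • x := by
  rw [Matrix.smul_mul, Matrix.one_mul]

lemma mul_i1 (x : Matrix n n ℂ) :
    x * (Complex.I • (1 : Matrix n n ℂ)) = Complex.I • x := by
  rw [Matrix.mul_smul, Matrix.mul_one]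

lemma sg_i1 : sg (Complex.I • (1 : Matrix n n ℂ)) = -(Complex.I • (1 : Matrix n n ℂ)) := by
  rw [sg_I_smul]
  congr 2
  ext j k; simp [sg, Matrix.map_apply, Matrix.one_apply, apply_ite]

lemma I_smul_eq_zero_iff {M : Matrix n n ℂ} : Complex.I • M = 0 ↔ M = 0 := by
  rw [smul_eq_zero]
  simp [Complex.I_ne_zero]

/-- The realification map. -/
def Psi (M : Matrix (n ⊕ n) (n ⊕ n) ℂ) :
    Matrix ((n × Fin 2) ⊕ (n × Fin 2)) ((n × Fin 2) ⊕ (n × Fin 2)) ℝ :=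
  Matrix.fromBlocks (RL M.toBlocks₁₁) (RL M.toBlocks₁₂ * Kn n)
    (RL (sg M.toBlocks₂₁) * Kn n) (RL (sg M.toBlocks₂₂))

lemma Psi_fromBlocks (a b c d : Matrix n n ℂ) :
    Psi (Matrix.fromBlocks a b c d) =
      Matrix.fromBlocks (RL a) (RL b * Kn n) (RL (sg c) * Kn n) (RL (sg d)) := by
  rw [Psi, Matrix.toBlocks_fromBlocks₁₁, Matrix.toBlocks_fromBlocks₁₂,
    Matrix.toBlocks_fromBlocks₂₁, Matrix.toBlocks_fromBlocks₂₂]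

lemma Psi_add (M N : Matrix (n ⊕ n) (n ⊕ n) ℂ) : Psi (M + N) = Psi M + Psi N := by
  rw [← Matrix.fromBlocks_toBlocks M, ← Matrix.fromBlocks_toBlocks N, Matrix.fromBlocks_add,
    Psi_fromBlocks, Psi_fromBlocks, Psi_fromBlocks, Matrix.fromBlocks_add,
    sg_add, sg_add, RL_add, RL_add, RL_add, RL_add, Matrix.add_mul, Matrix.add_mul]

lemma Psi_smul (r : ℝ) (M : Matrix (n ⊕ n) (n ⊕ n) ℂ) : Psi (r • M) = r • Psi M := by
  rw [← Matrix.fromBlocks_toBlocks M, Matrix.fromBlocks_smul,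
    Psi_fromBlocks, Psi_fromBlocks, Matrix.fromBlocks_smul,
    sg_smul, sg_smul, RL_smul, RL_smul, RL_smul, RL_smul, Matrix.smul_mul, Matrix.smul_mul]

lemma Psi_neg (M : Matrix (n ⊕ n) (n ⊕ n) ℂ) : Psi (-M) = -Psi M := by
  have h := Psi_smul (-1) M
  rw [neg_one_smul, neg_one_smul] at h
  exact h

lemma Psi_sub (M N : Matrix (n ⊕ n) (n ⊕ n) ℂ) : Psi (M - N) = Psi M - Psi N := by
  rw [sub_eq_add_neg, sub_eq_add_neg, Psi_add, Psi_neg]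

lemma RLK_mul_RLK (x y : Matrix n n ℂ) :
    (RL x * Kn n) * (RL y * Kn n) = RL (x * sg y) := by
  rw [Matrix.mul_assoc, ← Matrix.mul_assoc (Kn n), Kn_mul_RL, Matrix.mul_assoc,
    Kn_mul_Kn, Matrix.mul_one, ← RL_mul]
  rfl

lemma RL_mul_RLK (x y : Matrix n n ℂ) :
    RL x * (RL y * Kn n) = RL (x * y) * Kn n := by
  rw [← Matrix.mul_assoc, ← RL_mul]

lemma RLK_mul_RL (x y : Matrix n n ℂ) :
    (RL x * Kn n) * RL y = RL (x * sg y) * Kn n := by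
  rw [Matrix.mul_assoc, Kn_mul_RL, ← Matrix.mul_assoc, ← RL_mul]
  rfl

lemma Psi_mul (M N : Matrix (n ⊕ n) (n ⊕ n) ℂ) : Psi (M * N) = Psi M * Psi N := by
  rw [← Matrix.fromBlocks_toBlocks M, ← Matrix.fromBlocks_toBlocks N]
  set a := M.toBlocks₁₁; set b := M.toBlocks₁₂; set c := M.toBlocks₂₁; set d := M.toBlocks₂₂
  set a' := N.toBlocks₁₁; set b' := N.toBlocks₁₂; set c' := N.toBlocks₂₁; set d' := N.toBlocks₂₂
  rw [Matrix.fromBlocks_multiply, Psi_fromBlocks, Psi_fromBlocks, Psi_fromBlocks,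
    Matrix.fromBlocks_multiply, Matrix.fromBlocks_inj]
  refine ⟨?_, ?_, ?_, ?_⟩
  · rw [RLK_mul_RLK, sg_sg, RL_add, RL_mul]
  · rw [RL_mul_RLK, RLK_mul_RL, sg_sg, RL_add, Matrix.add_mul, RL_mul, RL_mul]
  · rw [RLK_mul_RL, RL_mul_RLK, sg_add, sg_mul, sg_mul, RL_add, Matrix.add_mul]
  · rw [RLK_mul_RLK, sg_add, sg_mul, sg_mul, RL_add, RL_mul, RL_mul]

lemma Psi_one : Psi (1 : Matrix (n ⊕ n) (n ⊕ n) ℂ) = 1 := by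
  have h1 : (1 : Matrix (n ⊕ n) (n ⊕ n) ℂ) = Matrix.fromBlocks 1 0 0 1 :=
    (Matrix.fromBlocks_one).symm
  have h2 : sg (0 : Matrix n n ℂ) = 0 := by rw [sg_eq_zero_iff]
  have h3 : sg (1 : Matrix n n ℂ) = 1 := by
    ext j k; simp [sg, Matrix.map_apply, Matrix.one_apply, apply_ite]
  rw [h1, Psi_fromBlocks, h2, h3, RL_zero, RL_one, Matrix.zero_mul, ← Matrix.fromBlocks_one]

lemma Psi_inj : Function.Injective (Psi (n := n)) := by
  intro M N h
  rw [← Matrix.fromBlocks_toBlocks M, ← Matrix.fromBlocks_toBlocks N]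
  rw [← Matrix.fromBlocks_toBlocks M, ← Matrix.fromBlocks_toBlocks N,
    Psi_fromBlocks, Psi_fromBlocks, Matrix.fromBlocks_inj] at h
  obtain ⟨h1, h2, h3, h4⟩ := h
  rw [Matrix.fromBlocks_inj]
  exact ⟨RL_inj h1, RL_mul_Kn_inj h2, sg_inj (RL_mul_Kn_inj h3), sg_inj (RL_inj h4)⟩

lemma Psi_transpose (a b c d : Matrix n n ℂ) :
    (Psi (Matrix.fromBlocks a b c d))ᵀ =
      Matrix.fromBlocks (RL (sg aᵀ)) (RL (sg cᵀ) * Kn n) (RL bᵀ * Kn n) (RL dᵀ) := by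
  rw [Psi_fromBlocks, Matrix.fromBlocks_transpose, Matrix.fromBlocks_inj]
  refine ⟨RL_transpose' a, ?_, ?_, ?_⟩
  · rw [RLK_transpose, sg_transpose]
  · rw [RLK_transpose]
  · rw [RL_transpose', sg_transpose, sg_sg]

/-- J₁ over a general index type. -/
def J1' (n : Type*) [Fintype n] [DecidableEq n] :
    Matrix ((n × Fin 2) ⊕ (n × Fin 2)) ((n × Fin 2) ⊕ (n × Fin 2)) ℝ :=
  Matrix.fromBlocks 0 1 (-1) 0

/-- J₂ over a general index type. -/
def J2' (n : Type*) [Fintype n] [DecidableEq n] :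
    Matrix ((n × Fin 2) ⊕ (n × Fin 2)) ((n × Fin 2) ⊕ (n × Fin 2)) ℝ :=
  Matrix.fromBlocks 0 (JnIf n) (JnIf n) 0

lemma J1_mul_fromBlocks (A B C D : Matrix (n × Fin 2) (n × Fin 2) ℝ) :
    J1' n * Matrix.fromBlocks A B C D = Matrix.fromBlocks C D (-A) (-B) := by
  rw [J1', Matrix.fromBlocks_multiply]
  simp

lemma fromBlocks_mul_J1 (A B C D : Matrix (n × Fin 2) (n × Fin 2) ℝ) :
    Matrix.fromBlocks A B C D * J1' n = Matrix.fromBlocks (-B) A (-D) C := by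
  rw [J1', Matrix.fromBlocks_multiply]
  simp

lemma J2_mul_fromBlocks (A B C D : Matrix (n × Fin 2) (n × Fin 2) ℝ) :
    J2' n * Matrix.fromBlocks A B C D =
      Matrix.fromBlocks (JnIf n * C) (JnIf n * D) (JnIf n * A) (JnIf n * B) := by
  rw [J2', Matrix.fromBlocks_multiply]
  simp

lemma fromBlocks_mul_J2 (A B C D : Matrix (n × Fin 2) (n × Fin 2) ℝ) :
    Matrix.fromBlocks A B C D * J2' n =
      Matrix.fromBlocks (B * JnIf n) (A * JnIf n) (D * JnIf n) (C * JnIf n) := by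
  rw [J2', Matrix.fromBlocks_multiply]
  simp

lemma fromBlocks_eq_zero_iff {A B C D : Matrix (n × Fin 2) (n × Fin 2) ℝ} :
    Matrix.fromBlocks A B C D = 0 ↔ A = 0 ∧ B = 0 ∧ C = 0 ∧ D = 0 := by
  rw [← Matrix.fromBlocks_zero, Matrix.fromBlocks_inj]

lemma cond1_iff (a b c d : Matrix n n ℂ) :
    J1' n * Psi (Matrix.fromBlocks a b c d) + (Psi (Matrix.fromBlocks a b c d))ᵀ * J1' n = 0 ↔
      (cᵀ = c ∧ d = -aᵀ ∧ bᵀ = b) := by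
  rw [Psi_transpose, Psi_fromBlocks, J1_mul_fromBlocks, fromBlocks_mul_J1,
    Matrix.fromBlocks_add, fromBlocks_eq_zero_iff]
  constructor
  · rintro ⟨h1, h2, -, h4⟩
    refine ⟨?_, ?_, ?_⟩
    · have : sg c - sg cᵀ = 0 := by
        rw [← RLK_eq_zero_iff (n := n), RL_sub, Matrix.sub_mul]
        rw [← sub_eq_add_neg] at h1
        exact h1
      have := sub_eq_zero.mp this
      exact (sg_inj this).symm
    · have : sg d + sg aᵀ = 0 := by
        rw [← RL_eq_zero_iff (n := n), RL_add]
        exact h2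
      have := eq_neg_of_add_eq_zero_left this
      rw [← sg_neg] at this
      exact sg_inj this
    · have h4' : RL bᵀ * Kn n - RL b * Kn n = 0 := by
        rw [sub_eq_add_neg, add_comm]
        exact h4
      rw [← Matrix.sub_mul, ← RL_sub, RLK_eq_zero_iff, sub_eq_zero] at h4'
      exact h4'
  · rintro ⟨hc, hd, hb⟩
    refine ⟨?_, ?_, ?_, ?_⟩
    · rw [hc]; simp
    · rw [hd, sg_neg, RL_neg, neg_add_cancel]
    · have hdt : dᵀ = -a := by rw [hd, Matrix.transpose_neg, Matrix.transpose_transpose]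
      rw [hdt, RL_neg]
      simp
    · rw [hb]
      simp

lemma cond2_zero (a b c d : Matrix n n ℂ)
    (hc : cᵀ = c) (hd : d = -aᵀ) (hb : bᵀ = b) :
    J2' n * Psi (Matrix.fromBlocks a b c d) + (Psi (Matrix.fromBlocks a b c d))ᵀ * J2' n = 0 := by
  rw [Psi_transpose, Psi_fromBlocks, J2_mul_fromBlocks, fromBlocks_mul_J2,
    Matrix.fromBlocks_add, fromBlocks_eq_zero_iff, JnIf_eq]
  have hKJ : Kn n * RL (Complex.I • (1 : Matrix n n ℂ)) =
      RL (-(Complex.I • (1 : Matrix n n ℂ))) * Kn n := by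
    rw [Kn_mul_RL]
    congr 1
    exact congrArg RL sg_i1
  refine ⟨?_, ?_, ?_, ?_⟩
  · -- RL(i1) * (RL (sg c) * Kn) + (RL (sg cᵀ) * Kn) * RL(i1) = 0
    rw [RL_mul_RLK, RLK_mul_RL, ← Matrix.add_mul, ← RL_add, RLK_eq_zero_iff,
      sg_i1, i1_mul, mul_neg, mul_i1, ← sub_eq_add_neg, ← smul_sub, I_smul_eq_zero_iff,
      hc, sub_self]
  · -- RL(i1) * RL (sg d) + RL (sg aᵀ) * RL(i1) = 0
    rw [← RL_mul, ← RL_mul, ← RL_add, RL_eq_zero_iff, i1_mul, mul_i1, ← smul_add,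
      I_smul_eq_zero_iff, ← sg_add, hd]
    simp [sg_eq_zero_iff]
  · -- RL(i1) * RL a + RL dᵀ * RL(i1) = 0
    have hdt : dᵀ = -a := by rw [hd, Matrix.transpose_neg, Matrix.transpose_transpose]
    rw [← RL_mul, ← RL_mul, ← RL_add, RL_eq_zero_iff, i1_mul, mul_i1, ← smul_add,
      I_smul_eq_zero_iff, hdt]
    simp
  · -- RL(i1) * (RL b * Kn) + (RL bᵀ * Kn) * RL(i1) = 0
    rw [RL_mul_RLK, RLK_mul_RL, ← Matrix.add_mul, ← RL_add, RLK_eq_zero_iff,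
      sg_i1, i1_mul, mul_neg, mul_i1, ← sub_eq_add_neg, ← smul_sub, I_smul_eq_zero_iff,
      hb, sub_self]

lemma conds_iff (a b c d : Matrix n n ℂ) :
    (J1' n * Psi (Matrix.fromBlocks a b c d) + (Psi (Matrix.fromBlocks a b c d))ᵀ * J1' n = 0 ∧
     J2' n * Psi (Matrix.fromBlocks a b c d) + (Psi (Matrix.fromBlocks a b c d))ᵀ * J2' n = 0) ↔
      (cᵀ = c ∧ d = -aᵀ ∧ bᵀ = b) := by
  constructor
  · intro h
    exact (cond1_iff a b c d).mp h.1
  · rintro ⟨hc, hd, hb⟩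
    exact ⟨(cond1_iff a b c d).mpr ⟨hc, hd, hb⟩, cond2_zero a b c d hc hd hb⟩

lemma sp_iff (a b c d : Matrix n n ℂ) :
    Matrix.fromBlocks a b c d ∈ LieAlgebra.Symplectic.sp n ℂ ↔
      (cᵀ = c ∧ d = -aᵀ ∧ bᵀ = b) := by
  rw [LieAlgebra.Symplectic.sp, mem_skewAdjointMatricesLieSubalgebra,
    mem_skewAdjointMatricesSubmodule]
  rw [Matrix.IsSkewAdjoint, Matrix.IsAdjointPair, Matrix.J]
  rw [Matrix.fromBlocks_transpose, Matrix.fromBlocks_neg, Matrix.fromBlocks_multiply,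
    Matrix.fromBlocks_multiply]
  simp only [Matrix.mul_zero, Matrix.zero_mul, Matrix.mul_neg, Matrix.mul_one,
    Matrix.neg_mul, Matrix.one_mul, add_zero, zero_add, neg_neg, neg_zero]
  rw [Matrix.fromBlocks_inj]
  constructor
  · rintro ⟨h1, h2, h3, h4⟩
    exact ⟨h1, h2.symm, neg_injective h4⟩
  · rintro ⟨hc, hd, hb⟩
    refine ⟨hc, hd.symm, ?_, by rw [hb]⟩
    rw [hd, Matrix.transpose_neg, Matrix.transpose_transpose]

lemma JnIf_mul_apply (Y : Matrix (n × Fin 2) (n × Fin 2) ℝ) (j k : n) (s t : Fin 2) :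
    (JnIf n * Y) (j, s) (k, t) = imat s 0 * Y (j, 0) (k, t) + imat s 1 * Y (j, 1) (k, t) := by
  rw [Matrix.mul_apply]
  simp only [JnIf, ite_mul, zero_mul]
  rw [sum_ite_left j (fun p => imat s p.2 * Y p (k, t)), Fin.sum_univ_two]

lemma mul_JnIf_apply (Y : Matrix (n × Fin 2) (n × Fin 2) ℝ) (j k : n) (s t : Fin 2) :
    (Y * JnIf n) (j, s) (k, t) = Y (j, s) (k, 0) * imat 0 t + Y (j, s) (k, 1) * imat 1 t := by
  rw [Matrix.mul_apply]
  simp only [JnIf, mul_ite, mul_zero]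
  rw [sum_ite_right k (fun p => Y (j, s) p * imat p.2 t), Fin.sum_univ_two]

lemma exists_RL_of_comm (Y : Matrix (n × Fin 2) (n × Fin 2) ℝ)
    (h : JnIf n * Y = Y * JnIf n) : ∃ x : Matrix n n ℂ, Y = RL x := by
  refine ⟨fun j k => ⟨Y (j, 0) (k, 0), Y (j, 1) (k, 0)⟩, ?_⟩
  ext ⟨j, s⟩ ⟨k, t⟩
  have h00 := congrFun (congrFun h (j, 0)) (k, 0)
  have h10 := congrFun (congrFun h (j, 1)) (k, 0)
  rw [JnIf_mul_apply, mul_JnIf_apply] at h00 h10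
  simp [imat] at h00 h10
  fin_cases s <;> fin_cases t <;> simp [RL, cm] <;> linarith [h00, h10]

lemma RL_mul_Kn' (M : Matrix n n ℂ) : RL M * Kn n = Kn n * RL (sg M) := RL_mul_Kn M

lemma Kn_mul_RL' (M : Matrix n n ℂ) : Kn n * RL M = RL (sg M) * Kn n := Kn_mul_RL M

lemma JnIf_Kn : JnIf n * Kn n = -(Kn n * JnIf n) := by
  rw [JnIf_eq, RL_mul_Kn', sg_i1, RL_neg, Matrix.mul_neg]

lemma surj (X : Matrix ((n × Fin 2) ⊕ (n × Fin 2)) ((n × Fin 2) ⊕ (n × Fin 2)) ℝ)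
    (h1 : J1' n * X + Xᵀ * J1' n = 0) (h2 : J2' n * X + Xᵀ * J2' n = 0) :
    ∃ M : Matrix (n ⊕ n) (n ⊕ n) ℂ, Psi M = X := by
  rw [← Matrix.fromBlocks_toBlocks X] at h1 h2 ⊢
  set A := X.toBlocks₁₁ with hA
  set B := X.toBlocks₁₂ with hBdef
  set C := X.toBlocks₂₁ with hCdef
  set D := X.toBlocks₂₂ with hDdef
  rw [Matrix.fromBlocks_transpose, J1_mul_fromBlocks, fromBlocks_mul_J1,
    Matrix.fromBlocks_add, fromBlocks_eq_zero_iff] at h1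
  obtain ⟨e1, e2, _, e4⟩ := h1
  rw [Matrix.fromBlocks_transpose, J2_mul_fromBlocks, fromBlocks_mul_J2,
    Matrix.fromBlocks_add, fromBlocks_eq_zero_iff] at h2
  obtain ⟨f1, -, f3, f4⟩ := h2
  -- basic consequences
  have hD : D = -Aᵀ := eq_neg_of_add_eq_zero_left e2
  have hDT : Dᵀ = -A := by rw [hD, Matrix.transpose_neg, Matrix.transpose_transpose]
  have hB : Bᵀ = B := by
    have h := eq_neg_of_add_eq_zero_right e4
    rw [h, neg_neg]
  have hC : Cᵀ = C := by
    have h := eq_neg_of_add_eq_zero_right e1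
    exact neg_inj.mp h
  -- A commutes with JnIf
  have commA : JnIf n * A = A * JnIf n := by
    have h := eq_neg_of_add_eq_zero_left f3
    rw [hDT, Matrix.neg_mul, neg_neg] at h
    exact h
  obtain ⟨a, ha⟩ := exists_RL_of_comm A commA
  -- B * Kn commutes with JnIf
  have hJB : JnIf n * B = -(B * JnIf n) := by
    have h := eq_neg_of_add_eq_zero_left f4
    rwa [hB] at h
  have commBK : JnIf n * (B * Kn n) = (B * Kn n) * JnIf n := by
    rw [← Matrix.mul_assoc, hJB, Matrix.neg_mul, Matrix.mul_assoc, JnIf_Kn,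
      Matrix.mul_neg, neg_neg, Matrix.mul_assoc]
  obtain ⟨b, hb⟩ := exists_RL_of_comm (B * Kn n) commBK
  have hB2 : B = RL b * Kn n := by
    rw [← hb, Matrix.mul_assoc, Kn_mul_Kn, Matrix.mul_one]
  -- C * Kn commutes with JnIf
  have hJC : JnIf n * C = -(C * JnIf n) := by
    have h := eq_neg_of_add_eq_zero_left f1
    rwa [hC] at h
  have commCK : JnIf n * (C * Kn n) = (C * Kn n) * JnIf n := by
    rw [← Matrix.mul_assoc, hJC, Matrix.neg_mul, Matrix.mul_assoc, JnIf_Kn,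
      Matrix.mul_neg, neg_neg, Matrix.mul_assoc]
  obtain ⟨c0, hc0⟩ := exists_RL_of_comm (C * Kn n) commCK
  have hC2 : C = RL c0 * Kn n := by
    rw [← hc0, Matrix.mul_assoc, Kn_mul_Kn, Matrix.mul_one]
  have hD2 : D = RL (sg (-aᵀ)) := by
    rw [hD, ha, RL_transpose', sg_neg, RL_neg]
  refine ⟨Matrix.fromBlocks a b (sg c0) (-aᵀ), ?_⟩
  rw [Psi_fromBlocks, sg_sg, Matrix.fromBlocks_inj]
  exact ⟨ha.symm, hB2.symm, hC2.symm, hD2.symm⟩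

section Dim

variable (r : ℕ)

/-- Index type for upper-triangular entries. -/
abbrev S2 (r : ℕ) := { p : Fin r × Fin r // p.1 ≤ p.2 }

/-- Symmetric matrix built from its upper-triangular entries. -/
def symOf (g : S2 r → ℂ) : Matrix (Fin r) (Fin r) ℂ :=
  Matrix.of fun j k => if h : j ≤ k then g ⟨(j, k), h⟩ else g ⟨(k, j), le_of_not_ge h⟩

lemma symOf_transpose (g : S2 r → ℂ) : (symOf r g)ᵀ = symOf r g := by
  ext j k
  simp only [Matrix.transpose_apply, symOf, Matrix.of_apply]
  by_cases h1 : j ≤ k <;> by_cases h2 : k ≤ j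
  · have : j = k := le_antisymm h1 h2
    subst this
    rfl
  · rw [dif_neg h2, dif_pos h1]
  · rw [dif_pos h2, dif_neg h1]
  · exact absurd (le_total j k) (by simp [h1, h2])

/-- `sp(r, ℂ)` is linearly equivalent to a product of coordinate spaces. -/
noncomputable def spEquiv : ↥(LieAlgebra.Symplectic.sp (Fin r) ℂ) ≃ₗ[ℂ]
    ((Fin r × Fin r → ℂ) × (S2 r → ℂ) × (S2 r → ℂ)) where
  toFun M := (fun p => M.val (Sum.inl p.1) (Sum.inl p.2),
              fun p => M.val (Sum.inl p.1.1) (Sum.inr p.1.2),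
              fun p => M.val (Sum.inr p.1.1) (Sum.inl p.1.2))
  map_add' M N := rfl
  map_smul' z M := rfl
  invFun t := ⟨Matrix.fromBlocks (Matrix.of fun j k => t.1 (j, k)) (symOf r t.2.1)
      (symOf r t.2.2) (-(Matrix.of fun j k => t.1 (j, k))ᵀ),
    (sp_iff _ _ _ _).mpr ⟨symOf_transpose r t.2.2, rfl, symOf_transpose r t.2.1⟩⟩
  left_inv M := by
    apply Subtype.ext
    have hm := M.2
    rw [← Matrix.fromBlocks_toBlocks M.val, sp_iff] at hm
    obtain ⟨hc, hd, hb⟩ := hm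
    ext i j
    cases i with
    | inl j1 =>
      cases j with
      | inl k1 => rfl
      | inr k1 =>
        show (symOf r fun p => M.val (Sum.inl p.1.1) (Sum.inr p.1.2)) j1 k1 = _
        rw [symOf, Matrix.of_apply]
        by_cases h : j1 ≤ k1
        · rw [dif_pos h]
        · rw [dif_neg h]
          have hb' := congrFun (congrFun hb k1) j1
          simp only [Matrix.transpose_apply, Matrix.toBlocks₁₂, Matrix.of_apply] at hb'
          show M.val (Sum.inl k1) (Sum.inr j1) = M.val (Sum.inl j1) (Sum.inr k1)
          exact hb'.symm
    | inr j1 =>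
      cases j with
      | inl k1 =>
        show (symOf r fun p => M.val (Sum.inr p.1.1) (Sum.inl p.1.2)) j1 k1 = _
        rw [symOf, Matrix.of_apply]
        by_cases h : j1 ≤ k1
        · rw [dif_pos h]
        · rw [dif_neg h]
          have hc' := congrFun (congrFun hc k1) j1
          simp only [Matrix.transpose_apply, Matrix.toBlocks₂₁, Matrix.of_apply] at hc'
          show M.val (Sum.inr k1) (Sum.inl j1) = M.val (Sum.inr j1) (Sum.inl k1)
          exact hc'.symm
      | inr k1 =>
        show -(M.val (Sum.inl k1) (Sum.inl j1)) = M.val (Sum.inr j1) (Sum.inr k1)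
        have := congrFun (congrFun hd j1) k1
        simp only [Matrix.toBlocks₂₂, Matrix.neg_apply, Matrix.transpose_apply,
          Matrix.toBlocks₁₁, Matrix.of_apply] at this
        exact this.symm
  right_inv t := by
    refine Prod.ext ?_ (Prod.ext ?_ ?_) <;> funext p
    · rfl
    · show (symOf r t.2.1) p.1.1 p.1.2 = t.2.1 p
      rw [symOf, Matrix.of_apply, dif_pos p.2]
    · show (symOf r t.2.2) p.1.1 p.1.2 = t.2.2 p
      rw [symOf, Matrix.of_apply, dif_pos p.2]

lemma finrank_sp : Module.finrank ℂ ↥(LieAlgebra.Symplectic.sp (Fin r) ℂ) = r * (2 * r + 1) := by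
  classical
  rw [(spEquiv r).finrank_eq, Module.finrank_prod, Module.finrank_prod]
  simp only [Module.finrank_fintype_fun_eq_card]
  have hcard : Fintype.card (S2 r) = (r + 1).choose 2 := by
    calc Fintype.card (S2 r) = Fintype.card (Sym2 (Fin r)) :=
          (Fintype.card_congr Sym2.sortEquiv).symm
      _ = (Fintype.card (Fin r) + 1).choose 2 := Sym2.card
      _ = (r + 1).choose 2 := by rw [Fintype.card_fin]
  have h2 : (r + 1).choose 2 + (r + 1).choose 2 = r * (r + 1) := by
    simp only [Nat.choose_two_right]
    have hm : (r + 1) * ((r + 1) - 1) = r * (r + 1) := by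
      simp [Nat.mul_comm]
    rw [hm]
    have hdvd : 2 ∣ r * (r + 1) := (Nat.even_mul_succ_self r).two_dvd
    omega
  rw [hcard, h2, Fintype.card_prod, Fintype.card_fin]
  ring

end Dim

end

end Stmt19Aux

open Stmt19Aux

/-- For the H-type algebra `n̂` with bracket components `J₁`, `J₂`, the Lie
algebra `g₀(n̂) = {X : J₁X + XᵀJ₁ = 0, J₂X + XᵀJ₂ = 0}` is isomorphic, as a real Lie
algebra, to `sp(r,ℂ)` regarded as a real Lie algebra; in particular its real dimension
is `r(2r+1)·2`. -/
theorem stmt19 (r : ℕ)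
    (L : LieSubalgebra ℝ (Matrix ((Fin r × Fin 2) ⊕ (Fin r × Fin 2))
      ((Fin r × Fin 2) ⊕ (Fin r × Fin 2)) ℝ))
    (hL : (L : Set (Matrix ((Fin r × Fin 2) ⊕ (Fin r × Fin 2))
        ((Fin r × Fin 2) ⊕ (Fin r × Fin 2)) ℝ)) =
      {X | J1mat r * X + Xᵀ * J1mat r = 0 ∧ J2mat r * X + Xᵀ * J2mat r = 0}) :
    Nonempty (L ≃ₗ⁅ℝ⁆
        RestrictScalars ℝ ℂ (LieAlgebra.Symplectic.sp (Fin r) ℂ)) ∧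
    Module.finrank ℝ L = r * (2 * r + 1) * 2 := by
  classical
  have hmemL : ∀ X, X ∈ L ↔
      (J1' (Fin r) * X + Xᵀ * J1' (Fin r) = 0 ∧ J2' (Fin r) * X + Xᵀ * J2' (Fin r) = 0) := by
    intro X
    rw [← SetLike.mem_coe, hL]
    exact Iff.rfl
  have hPsiMem : ∀ M : Matrix (Fin r ⊕ Fin r) (Fin r ⊕ Fin r) ℂ,
      Psi M ∈ L ↔ M ∈ LieAlgebra.Symplectic.sp (Fin r) ℂ := by
    intro M
    rw [hmemL]
    rw [show M = Matrix.fromBlocks M.toBlocks₁₁ M.toBlocks₁₂ M.toBlocks₂₁ M.toBlocks₂₂ from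
      (Matrix.fromBlocks_toBlocks M).symm]
    rw [conds_iff, sp_iff]
  let toSp : RestrictScalars ℝ ℂ ↥(LieAlgebra.Symplectic.sp (Fin r) ℂ) ≃+
      ↥(LieAlgebra.Symplectic.sp (Fin r) ℂ) := RestrictScalars.addEquiv ℝ ℂ _
  let F : RestrictScalars ℝ ℂ ↥(LieAlgebra.Symplectic.sp (Fin r) ℂ) → ↥L :=
    fun M => ⟨Psi (toSp M).val, (hPsiMem _).mpr (toSp M).2⟩
  have hsurj : ∀ X : ↥L, ∃ M : ↥(LieAlgebra.Symplectic.sp (Fin r) ℂ),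
      Psi M.val = X.val := by
    intro X
    obtain ⟨h1, h2⟩ := (hmemL X.val).mp X.2
    obtain ⟨M, hM⟩ := surj X.val h1 h2
    exact ⟨⟨M, (hPsiMem M).mp (by rw [hM]; exact X.2)⟩, hM⟩
  let G : ↥L → RestrictScalars ℝ ℂ ↥(LieAlgebra.Symplectic.sp (Fin r) ℂ) :=
    fun X => toSp.symm (hsurj X).choose
  let E : RestrictScalars ℝ ℂ ↥(LieAlgebra.Symplectic.sp (Fin r) ℂ) ≃ₗ⁅ℝ⁆ ↥L :=
    { toFun := F
      map_add' := fun M N => Subtype.ext (by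
        show Psi ((toSp (M + N)).val) = Psi (toSp M).val + Psi (toSp N).val
        have h1 : (toSp (M + N)).val = (toSp M).val + (toSp N).val := rfl
        rw [h1, Psi_add])
      map_smul' := fun t M => Subtype.ext (by
        show Psi ((toSp (t • M)).val) = t • Psi (toSp M).val
        have h1 : (toSp (t • M)).val = (algebraMap ℝ ℂ t) • (toSp M).val := rfl
        have h2 : (algebraMap ℝ ℂ t) • (toSp M).val = t • (toSp M).val :=
          algebraMap_smul ℂ t _
        rw [h1, h2, Psi_smul])
      map_lie' := fun {M N} => Subtype.ext (by
        show Psi ((toSp ⁅M, N⁆).val) = ⁅Psi (toSp M).val, Psi (toSp N).val⁆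
        have h1 : (toSp ⁅M, N⁆).val = ⁅(toSp M).val, (toSp N).val⁆ := rfl
        rw [h1, Ring.lie_def, Ring.lie_def, Psi_sub, Psi_mul, Psi_mul])
      invFun := G
      left_inv := fun M => by
        have hspec := (hsurj (F M)).choose_spec
        have hch : (hsurj (F M)).choose = toSp M :=
          Subtype.ext (Psi_inj (by rw [hspec]))
        show toSp.symm (hsurj (F M)).choose = M
        rw [hch]
        exact toSp.symm_apply_apply M
        
      right_inv := fun X => Subtype.ext (by
        show Psi ((toSp (toSp.symm (hsurj X).choose)).val) = X.val
        rw [toSp.apply_symm_apply]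
        exact (hsurj X).choose_spec) }
  refine ⟨⟨E.symm⟩, ?_⟩
  letI : Module ℂ (RestrictScalars ℝ ℂ ↥(LieAlgebra.Symplectic.sp (Fin r) ℂ)) :=
    RestrictScalars.moduleOrig ℝ ℂ _
  have h1 : Module.finrank ℝ (RestrictScalars ℝ ℂ ↥(LieAlgebra.Symplectic.sp (Fin r) ℂ)) =
      Module.finrank ℝ ↥L :=
    LinearEquiv.finrank_eq E.toLinearEquiv
  haveI : Module.Free ℂ (RestrictScalars ℝ ℂ ↥(LieAlgebra.Symplectic.sp (Fin r) ℂ)) :=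
    by have := Module.Free.of_divisionRing ℂ ↥(LieAlgebra.Symplectic.sp (Fin r) ℂ); exact this
  have h2 : Module.finrank ℝ ℂ *
        Module.finrank ℂ (RestrictScalars ℝ ℂ ↥(LieAlgebra.Symplectic.sp (Fin r) ℂ)) =
      Module.finrank ℝ (RestrictScalars ℝ ℂ ↥(LieAlgebra.Symplectic.sp (Fin r) ℂ)) :=
    Module.finrank_mul_finrank ℝ ℂ _
  have h3 : Module.finrank ℂ (RestrictScalars ℝ ℂ ↥(LieAlgebra.Symplectic.sp (Fin r) ℂ)) =
      r * (2 * r + 1) := by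
    have h4 : Module.finrank ℂ (RestrictScalars ℝ ℂ ↥(LieAlgebra.Symplectic.sp (Fin r) ℂ)) =
        Module.finrank ℂ ↥(LieAlgebra.Symplectic.sp (Fin r) ℂ) := rfl
    rw [h4, finrank_sp]
  rw [← h1, ← h2, h3, Complex.finrank_real_complex]
  ring
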